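/- Let H be a graph with minimum degree δ(H) ≥ 2, let H⃗ be an anti-directed orientation of H, and let G be a graph with m(G) < δ(H) − 1/2. Then there exists an orientation of G containing no copy of H⃗. -/

import Mathlib

/-- An orientation of a simple graph `G`: an assignment of a direction to each edge. -/
structure GraphOrientation {V : Type*} (G : SimpleGraph V) where
  adj : V → V → Prop
  le : ∀ {u v}, adj u v → G.Adj u v
  total : ∀ {u v}, G.Adj u v → adj u v ∨ adj v u
  asymm : ∀ {u v}, adj u v → ¬ adj v u

open Finset

lemma lowdeg_aux {V : Type*} [Fintype V] (G : SimpleGraph V) [DecidableRel G.Adj] (d : ℕ) (hd : 2 ≤ d)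
    (hm : ∀ J : G.Subgraph, J.verts.Nonempty →
      (J.edgeSet.ncard : ℚ) < ((d : ℚ) - 1/2) * J.verts.ncard) :
    ∀ S : Finset V, S.Nonempty → ∃ v ∈ S, (S.filter (fun w => G.Adj v w)).card ≤ 2*d-2 := by
  classical
  intro S hS
  by_contra hc
  push_neg at hc
  set J : G.Subgraph :=
    { verts := ↑S
      Adj := fun x y => x ∈ S ∧ y ∈ S ∧ G.Adj x y
      adj_sub := fun h => h.2.2
      edge_vert := fun h => Finset.mem_coe.mpr h.1
      symm := ⟨fun x y h => ⟨h.2.1, h.1, h.2.2.symm⟩⟩ } with hJ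
  have e1 : J.edgeSet.ncard = J.coe.edgeFinset.card := by
    rw [← SimpleGraph.Subgraph.image_coe_edgeSet_coe,
      Set.ncard_image_of_injective _ (Sym2.map.injective Subtype.coe_injective),
      Set.ncard_eq_toFinset_card']
    congr 1
  have e2 : ∑ v, J.coe.degree v = 2 * J.coe.edgeFinset.card :=
    SimpleGraph.sum_degrees_eq_twice_card_edges _
  have e3 : ∀ v : J.verts, J.coe.degree v = (S.filter (fun w => G.Adj v.1 w)).card := by
    intro v
    rw [SimpleGraph.degree]
    apply Finset.card_bij (fun w _ => w.1)
    · intro a ha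
      rw [SimpleGraph.mem_neighborFinset] at ha
      exact Finset.mem_filter.mpr ⟨ha.2.1, ha.2.2⟩
    · intro a _ b _ hab
      exact Subtype.ext hab
    · intro b hb
      rw [Finset.mem_filter] at hb
      refine ⟨⟨b, Finset.mem_coe.mpr hb.1⟩, ?_, rfl⟩
      rw [SimpleGraph.mem_neighborFinset]
      exact ⟨v.2, hb.1, hb.2⟩
  have e4 : ∑ v : J.verts, (S.filter (fun w => G.Adj v.1 w)).card
      = ∑ v ∈ S, (S.filter (fun w => G.Adj v w)).card := by
    apply Finset.sum_bij (fun (v : J.verts) _ => v.1)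
    · intro a _; exact a.2
    · intro a _ b _ hab; exact Subtype.ext hab
    · intro b hb; exact ⟨⟨b, Finset.mem_coe.mpr hb⟩, Finset.mem_univ _, rfl⟩
    · intro a _; rfl
  have sum_lb : S.card * (2*d-1) ≤ ∑ v ∈ S, (S.filter (fun w => G.Adj v w)).card := by
    have h1 : ∀ v ∈ S, 2*d-1 ≤ (S.filter (fun w => G.Adj v w)).card := fun v hv => by
      have := hc v hv; omega
    calc S.card * (2*d-1) = ∑ _v ∈ S, (2*d-1) := by rw [Finset.sum_const, smul_eq_mul]
    _ ≤ _ := Finset.sum_le_sum h1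
  have key : S.card * (2*d-1) ≤ 2 * J.edgeSet.ncard := by
    rw [e1, ← e2]
    calc S.card * (2*d-1) ≤ ∑ v ∈ S, (S.filter (fun w => G.Adj v w)).card := sum_lb
    _ = ∑ v : J.verts, (S.filter (fun w => G.Adj v.1 w)).card := e4.symm
    _ = ∑ v, J.coe.degree v := by exact Finset.sum_congr rfl (fun v _ => (e3 v).symm)
  have hne : J.verts.Nonempty := by
    exact Finset.coe_nonempty.mpr hS
  have hlt := hm J hne
  have hverts : J.verts.ncard = S.card := Set.ncard_coe_finset S
  rw [hverts] at hlt
  have hc1 : (1:ℚ) ≤ S.card := by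
    exact_mod_cast Nat.one_le_iff_ne_zero.mpr (Finset.card_ne_zero.mpr hS)
  have keyQ := (Nat.cast_le (α := ℚ)).mpr key
  push_cast [Nat.cast_sub (show 1 ≤ 2*d by omega)] at keyQ
  nlinarith [hlt, keyQ]

lemma rank_aux {V : Type*} [DecidableEq V] (G : SimpleGraph V) [DecidableRel G.Adj] (d : ℕ)
    (hlow : ∀ S : Finset V, S.Nonempty → ∃ v ∈ S, (S.filter (fun w => G.Adj v w)).card ≤ 2*d-2) :
    ∀ n (S : Finset V), S.card = n →
      ∃ r : V → ℕ, (∀ v ∈ S, ∀ w ∈ S, r v = r w → v = w) ∧ (∀ v ∈ S, r v < n) ∧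
        (∀ v ∈ S, (S.filter (fun w => G.Adj v w ∧ r w < r v)).card ≤ 2*d-2) := by
  intro n
  induction n with
  | zero =>
    intro S hS
    have : S = ∅ := Finset.card_eq_zero.mp hS
    subst this
    exact ⟨fun _ => 0, by simp, by simp, by simp⟩
  | succ n ih =>
    intro S hS
    have hSne : S.Nonempty := Finset.card_pos.mp (by omega)
    obtain ⟨v, hvS, hvdeg⟩ := hlow S hSne
    obtain ⟨r', hinj, hbd, hdeg⟩ := ih (S.erase v) (by rw [Finset.card_erase_of_mem hvS, hS]; omega)
    refine ⟨Function.update r' v n, ?_, ?_, ?_⟩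
    · intro x hx y hy hxy
      by_cases hxv : x = v <;> by_cases hyv : y = v
      · rw [hxv, hyv]
      · exfalso
        rw [hxv, Function.update_self, Function.update_of_ne hyv] at hxy
        exact absurd (hbd y (Finset.mem_erase.mpr ⟨hyv, hy⟩)) (by omega)
      · exfalso
        rw [hyv, Function.update_self, Function.update_of_ne hxv] at hxy
        exact absurd (hbd x (Finset.mem_erase.mpr ⟨hxv, hx⟩)) (by omega)
      · rw [Function.update_of_ne hxv, Function.update_of_ne hyv] at hxy
        exact hinj x (Finset.mem_erase.mpr ⟨hxv, hx⟩) y (Finset.mem_erase.mpr ⟨hyv, hy⟩) hxy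
    · intro x hx
      by_cases hxv : x = v
      · rw [hxv, Function.update_self]; omega
      · rw [Function.update_of_ne hxv]
        have := hbd x (Finset.mem_erase.mpr ⟨hxv, hx⟩); omega
    · intro x hx
      by_cases hxv : x = v
      · subst hxv
        refine le_trans (Finset.card_le_card ?_) hvdeg
        intro w hw
        rw [Finset.mem_filter] at hw ⊢
        exact ⟨hw.1, hw.2.1⟩
      · have hx' : x ∈ S.erase v := Finset.mem_erase.mpr ⟨hxv, hx⟩
        have hrx : Function.update r' v n x = r' x := Function.update_of_ne hxv _ _
        have heq : S.filter (fun w => G.Adj x w ∧ Function.update r' v n w < Function.update r' v n x)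
            = (S.erase v).filter (fun w => G.Adj x w ∧ r' w < r' x) := by
          ext w
          simp only [Finset.mem_filter, Finset.mem_erase]
          constructor
          · rintro ⟨hwS, hadj, hlt⟩
            rw [hrx] at hlt
            have hwv : w ≠ v := by
              intro hwv
              rw [hwv, Function.update_self] at hlt
              have := hbd x hx'
              omega
            rw [Function.update_of_ne hwv] at hlt
            exact ⟨⟨hwv, hwS⟩, hadj, hlt⟩
          · rintro ⟨⟨hwv, hwS⟩, hadj, hlt⟩
            rw [hrx, Function.update_of_ne hwv]
            exact ⟨hwS, hadj, hlt⟩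
        rw [heq]
        exact hdeg x hx'


/-- Let `H` be a graph with `δ(H) ≥ 2`, let `H⃗` be an anti-directed
orientation of `H` (every vertex has no in-neighbours or no out-neighbours), and let
`G` be a graph with `m(G) < δ(H) - 1/2`.  Then some orientation of `G` contains
no copy of `H⃗`. -/
theorem antidirected_not_oriented_ramsey {V W : Type*} [Fintype V] [Fintype W]
    (H : SimpleGraph W) [DecidableRel H.Adj] (G : SimpleGraph V)
    (hδ : 2 ≤ H.minDegree)
    (h : GraphOrientation H)
    (hanti : ∀ v : W, (∀ u, ¬ h.adj u v) ∨ (∀ u, ¬ h.adj v u))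
    (hm : ∀ J : G.Subgraph, J.verts.Nonempty →
      (J.edgeSet.ncard : ℚ) < ((H.minDegree : ℚ) - 1/2) * J.verts.ncard) :
    ∃ o : GraphOrientation G, ¬ ∃ f : W → V, Function.Injective f ∧
      ∀ a b, h.adj a b → o.adj (f a) (f b) := by
  classical
  set d := H.minDegree with hd
  have hlow := lowdeg_aux G d hδ hm
  obtain ⟨r, hrinj, -, hrdeg⟩ := rank_aux G d hlow (Fintype.card V) Finset.univ (by simp)
  have hrI : Function.Injective r := fun a b hab =>
    hrinj a (Finset.mem_univ a) b (Finset.mem_univ b) hab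
  set B : V → Finset V := fun v => Finset.univ.filter (fun w => G.Adj v w ∧ r w < r v) with hBdef
  have hB : ∀ v, (B v).card ≤ 2*d-2 := fun v => hrdeg v (Finset.mem_univ v)
  have hO : ∀ v : V, ∃ t ⊆ B v, t.card = min (B v).card (d-1) := fun v =>
    Finset.exists_subset_card_eq (min_le_left _ _)
  choose O hOsub hOcard using hO
  refine ⟨⟨fun x y => G.Adj x y ∧ ((r y < r x ∧ y ∈ O x) ∨ (r x < r y ∧ x ∉ O y)),
    fun hxy => hxy.1, ?_, ?_⟩, ?_⟩
  · intro u v huv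
    have hne : r u ≠ r v := fun hru => G.ne_of_adj huv (hrI hru)
    rcases Nat.lt_or_ge (r v) (r u) with hlt | hge
    · by_cases hmem : v ∈ O u
      · exact Or.inl ⟨huv, Or.inl ⟨hlt, hmem⟩⟩
      · exact Or.inr ⟨huv.symm, Or.inr ⟨hlt, hmem⟩⟩
    · have hlt : r u < r v := by omega
      by_cases hmem : u ∈ O v
      · exact Or.inr ⟨huv.symm, Or.inl ⟨hlt, hmem⟩⟩
      · exact Or.inl ⟨huv, Or.inr ⟨hlt, hmem⟩⟩
  · rintro u v ⟨-, h1⟩ ⟨-, h2⟩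
    rcases h1 with ⟨hlt1, hm1⟩ | ⟨hlt1, hm1⟩ <;> rcases h2 with ⟨hlt2, hm2⟩ | ⟨hlt2, hm2⟩
    · omega
    · exact hm2 hm1
    · exact hm1 hm2
    · omega
  · rintro ⟨f, finj, hcopy⟩
    have hW : Nonempty W := by
      by_contra hW
      haveI := not_nonempty_iff.mp hW
      have : H.minDegree = 0 := by
        unfold SimpleGraph.minDegree
        rw [Finset.univ_eq_empty, Finset.image_empty, Finset.min_empty]
        rfl
      omega
    obtain ⟨a, -, hamax⟩ := Finset.exists_max_image Finset.univ (fun a => r (f a))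
      Finset.univ_nonempty
    have hT : d ≤ ((H.neighborFinset a).image f).card := by
      rw [Finset.card_image_of_injective _ finj]
      exact H.minDegree_le_degree a
    rcases hanti a with hin | hout
    · have hsub : (H.neighborFinset a).image f ⊆ O (f a) := by
        intro x hx
        obtain ⟨b, hb, rfl⟩ := Finset.mem_image.mp hx
        have hab : H.Adj a b := by simpa using hb
        have hadj : h.adj a b := (h.total hab).resolve_right (hin b)
        rcases (hcopy a b hadj).2 with ⟨-, hmem⟩ | ⟨hlt, -⟩
        · exact hmem
        · exact absurd (hamax b (Finset.mem_univ b)) (by omega)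
      have h1 := Finset.card_le_card hsub
      have h2 := hOcard (f a)
      omega
    · have hsub : (H.neighborFinset a).image f ⊆ B (f a) \ O (f a) := by
        intro x hx
        obtain ⟨b, hb, rfl⟩ := Finset.mem_image.mp hx
        have hab : H.Adj a b := by simpa using hb
        have hadj : h.adj b a := (h.total hab.symm).resolve_right (hout b)
        rcases (hcopy b a hadj).2 with ⟨hlt, -⟩ | ⟨hlt, hnm⟩
        · exact absurd (hamax b (Finset.mem_univ b)) (by omega)
        · refine Finset.mem_sdiff.mpr ⟨?_, hnm⟩
          rw [hBdef]
          exact Finset.mem_filter.mpr ⟨Finset.mem_univ _, ((hcopy b a hadj).1).symm, hlt⟩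
      have h1 := Finset.card_le_card hsub
      rw [Finset.card_sdiff_of_subset (hOsub (f a))] at h1
      have h2 := hOcard (f a)
      have h3 := hB (f a)
      omega
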